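/- Let p_1 < p_2 < … < p_r be prime numbers, q := p_1⋯p_r, and R := ℤ[1/q]. For each 1 ≤ i ≤ r let |·|_i be an absolute value on the algebraic closure ℚ̄ of ℚ extending the p_i-adic absolute value of ℚ, fix an embedding of ℚ̄ into ℂ and let |·|_0 be the restriction to ℚ̄ of the complex absolute value. Then for every n ≥ 1 there exists a constant c > 1 such that for every nonzero x ∈ ℚ̄ which is integral over R and whose minimal polynomial over ℚ has degree at most n, either x is a root of unity, or |y|_i ≥ c for some 0 ≤ i ≤ r and some Galois conjugate y of x (i.e., some root y ∈ ℚ̄ of the minimal polynomial of x over ℚ). -/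

import Mathlib

open Polynomial

-- growth lemma
lemma le_of_pow_le_linear {x M : ℝ} (hM : 0 ≤ M)
    (h : ∀ N : ℕ, x ^ N ≤ (N + 1) * M ^ N) : x ≤ M := by
  by_contra hlt
  push_neg at hlt
  have hx : 0 < x := lt_of_le_of_lt hM hlt
  rcases eq_or_lt_of_le hM with hM0 | hM0
  · have := h 1
    rw [← hM0] at this
    norm_num at this
    linarith
  · set t : ℝ := x / M with ht
    have ht1 : 1 < t := (one_lt_div hM0).2 hlt
    have key : ∀ N : ℕ, t ^ N ≤ N + 1 := by
      intro N
      have hMN : 0 < M ^ N := pow_pos hM0 N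
      have : t ^ N * M ^ N ≤ (N + 1) * M ^ N := by
        rw [ht, div_pow, div_mul_cancel₀]
        · exact h N
        · exact ne_of_gt hMN
      exact le_of_mul_le_mul_right this hMN
    set ε : ℝ := t - 1 with hε
    have hε0 : 0 < ε := by simp only [hε]; linarith
    obtain ⟨N, hN⟩ := exists_nat_gt (max 1 (3 / ε ^ 2))
    have hN1 : (1:ℝ) ≤ N := le_of_lt (lt_of_le_of_lt (le_max_left _ _) hN)
    have hN3 : 3 / ε ^ 2 < N := lt_of_le_of_lt (le_max_right _ _) hN
    have hber : 1 + (N : ℝ) * ε ≤ t ^ N := by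
      have := one_add_mul_le_pow (a := ε) (by linarith) N
      simpa [hε] using this
    have h2 : (1 + (N : ℝ) * ε) ^ 2 ≤ t ^ (2 * N) := by
      rw [two_mul, pow_add]
      have h0 : (0:ℝ) ≤ 1 + (N:ℝ) * ε := by positivity
      nlinarith
    have h3 : (3:ℝ) * N < ((N:ℝ) * ε) ^ 2 := by
      have : 3 < (N:ℝ) * ε ^ 2 := by
        rw [div_lt_iff₀ (by positivity)] at hN3
        linarith
      calc (3:ℝ) * N < ((N:ℝ) * ε ^ 2) * N := by nlinarith
        _ = ((N:ℝ) * ε) ^ 2 := by ring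
    have h4 := key (2 * N)
    push_cast at h4
    nlinarith

-- nonarchimedean
lemma nonarch_of_int_le_one {F : Type*} [Field F] (w : AbsoluteValue F ℝ)
    (h : ∀ k : ℕ, w k ≤ 1) (a b : F) : w (a + b) ≤ max (w a) (w b) := by
  set M := max (w a) (w b) with hM
  have hMnn : 0 ≤ M := le_trans (w.nonneg a) (le_max_left _ _)
  have ha : w a ≤ M := le_max_left _ _
  have hb : w b ≤ M := le_max_right _ _
  refine le_of_pow_le_linear hMnn fun N => ?_
  calc w (a + b) ^ N = w ((a + b) ^ N) := (w.map_pow _ _).symm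
    _ = w (∑ k ∈ Finset.range (N + 1), a ^ k * b ^ (N - k) * (N.choose k : F)) := by
        rw [add_pow]
    _ ≤ ∑ k ∈ Finset.range (N + 1), w (a ^ k * b ^ (N - k) * (N.choose k : F)) :=
        w.sum_le _ _
    _ ≤ ∑ k ∈ Finset.range (N + 1), M ^ N := by
        refine Finset.sum_le_sum fun k hk => ?_
        rw [Finset.mem_range, Nat.lt_succ_iff] at hk
        rw [w.map_mul, w.map_mul, w.map_pow, w.map_pow]
        calc w a ^ k * w b ^ (N - k) * w (N.choose k : F)
            ≤ M ^ k * M ^ (N - k) * 1 := by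
              refine mul_le_mul (mul_le_mul (pow_le_pow_left₀ (w.nonneg a) ha k)
                (pow_le_pow_left₀ (w.nonneg b) hb (N - k)) (by positivity) (by positivity))
                (h _) (w.nonneg _) (by positivity)
          _ = M ^ N := by rw [mul_one, ← pow_add, Nat.add_sub_cancel' hk]
    _ = (N + 1) * M ^ N := by
        rw [Finset.sum_const, Finset.card_range]; push_cast; ring

-- multiset product bound
lemma absv_multiset_prod_le {F : Type*} [Field F] (w : AbsoluteValue F ℝ) {c : ℝ}
    (hc : 0 ≤ c) (s : Multiset F) (hs : ∀ y ∈ s, w y ≤ c) :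
    w s.prod ≤ c ^ (Multiset.card s) := by
  induction s using Multiset.induction with
  | empty => simp [w.map_one]
  | cons a t ih =>
    rw [Multiset.prod_cons, w.map_mul, Multiset.card_cons, pow_succ, mul_comm (c ^ _) c]
    exact mul_le_mul (hs a (Multiset.mem_cons_self a t))
      (ih fun y hy => hs y (Multiset.mem_cons_of_mem hy)) (w.nonneg _)
      hc

-- nonarch sum bound
lemma absv_multiset_sum_le_of_nonarch {F : Type*} [Field F] (w : AbsoluteValue F ℝ)
    (hna : ∀ a b, w (a + b) ≤ max (w a) (w b)) {c : ℝ} (hc : 0 ≤ c)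
    (s : Multiset F) (hs : ∀ y ∈ s, w y ≤ c) : w s.sum ≤ c := by
  induction s using Multiset.induction with
  | empty => simpa using hc
  | cons a t ih =>
    rw [Multiset.sum_cons]
    refine le_trans (hna a t.sum) (max_le (hs a (Multiset.mem_cons_self a t))
      (ih fun y hy => hs y (Multiset.mem_cons_of_mem hy)))

-- esymm bounds
lemma absv_esymm_le_of_nonarch {F : Type*} [Field F] (w : AbsoluteValue F ℝ)
    (hna : ∀ a b, w (a + b) ≤ max (w a) (w b)) {c : ℝ} (hc : 0 ≤ c)
    (s : Multiset F) (hs : ∀ y ∈ s, w y ≤ c) (k : ℕ) :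
    w (s.esymm k) ≤ c ^ k := by
  refine absv_multiset_sum_le_of_nonarch w hna (by positivity) _ fun y hy => ?_
  rw [Multiset.mem_map] at hy
  obtain ⟨t, ht, rfl⟩ := hy
  rw [Multiset.mem_powersetCard] at ht
  rw [← ht.2]
  exact absv_multiset_prod_le w hc t fun z hz => hs z (Multiset.mem_of_le ht.1 hz)

lemma absv_multiset_sum_le {F : Type*} [Field F] (w : AbsoluteValue F ℝ)
    (s : Multiset F) : w s.sum ≤ (s.map w).sum := by
  induction s using Multiset.induction with
  | empty => simp
  | cons a t ih =>
    rw [Multiset.sum_cons, Multiset.map_cons, Multiset.sum_cons]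
    exact le_trans (w.add_le _ _) (by linarith)

lemma absv_esymm_le {F : Type*} [Field F] (w : AbsoluteValue F ℝ) {c : ℝ}
    (hc : 0 ≤ c) (s : Multiset F) (hs : ∀ y ∈ s, w y ≤ c) (k : ℕ) :
    w (s.esymm k) ≤ ((Multiset.card s).choose k) * c ^ k := by
  rw [Multiset.esymm]
  refine le_trans (absv_multiset_sum_le w _) ?_
  have hcard : Multiset.card ((s.powersetCard k).map Multiset.prod) = (Multiset.card s).choose k := by
    rw [Multiset.card_map, Multiset.card_powersetCard]
  calc ((s.powersetCard k).map Multiset.prod |>.map w).sum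
      ≤ Multiset.card (((s.powersetCard k).map Multiset.prod).map w) • (c ^ k) := by
        refine Multiset.sum_le_card_nsmul _ _ fun x hx => ?_
        rw [Multiset.mem_map] at hx
        obtain ⟨t, ht, rfl⟩ := hx
        rw [Multiset.mem_map] at ht
        obtain ⟨u, hu, rfl⟩ := ht
        rw [Multiset.mem_powersetCard] at hu
        rw [← hu.2]
        exact absv_multiset_prod_le w hc u fun z hz => hs z (Multiset.mem_of_le hu.1 hz)
    _ = ((Multiset.card s).choose k) * c ^ k := by
        rw [Multiset.card_map, hcard, nsmul_eq_mul]

lemma one_lt_padicNorm_of_dvd_den {ℓ : ℕ} [hℓ : Fact ℓ.Prime] {x : ℚ}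
    (h : ℓ ∣ x.den) : 1 < padicNorm ℓ x := by
  have hx : x ≠ 0 := by
    rintro rfl
    exact hℓ.out.one_lt.ne' (Nat.dvd_one.mp (by simpa using h))
  have hden : 1 ≤ padicValNat ℓ x.den :=
    one_le_padicValNat_of_dvd x.den_pos.ne' h
  have hnum : padicValInt ℓ x.num = 0 := by
    rw [padicValInt]
    refine padicValNat.eq_zero_of_not_dvd fun hdvd => ?_
    have := Nat.Coprime.eq_one_of_dvd (Nat.Coprime.coprime_dvd_left hdvd x.reduced) h
    exact hℓ.out.one_lt.ne' this
  have hval : padicValRat ℓ x ≤ -1 := by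
    rw [padicValRat, hnum]
    omega
  rw [padicNorm.eq_zpow_of_nonzero hx]
  have hℓ1 : (1:ℚ) < (ℓ : ℚ) := by exact_mod_cast hℓ.out.one_lt
  calc (1:ℚ) = (ℓ:ℚ) ^ (0:ℤ) := by simp
    _ < (ℓ:ℚ) ^ (-padicValRat ℓ x) := by
        rw [zpow_lt_zpow_iff_right₀ hℓ1]
        omega

lemma den_eq_one_of_padic {r' : ℕ} {p : Fin r' → ℕ} (hp : ∀ i, (p i).Prime)
    {x : ℚ} (a : ℤ) (m : ℕ)
    (hx : x * ((∏ i : Fin r', (p i : ℚ))) ^ m = a)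
    (hnorm : ∀ i, padicNorm (p i) x ≤ 1) : x.den = 1 := by
  rw [Nat.eq_one_iff_not_exists_prime_dvd]
  intro ℓ hℓp hdvd
  haveI : Fact ℓ.Prime := ⟨hℓp⟩
  -- ℓ divides q ^ m
  have hq : (∏ i : Fin r', (p i : ℚ)) = ((∏ i : Fin r', (p i : ℤ) : ℤ) : ℚ) := by
    push_cast; rfl
  have hden_dvd : (x.den : ℤ) ∣ (∏ i : Fin r', (p i : ℤ)) ^ m := by
    have hx' : x = (a : ℚ) / (((∏ i : Fin r', (p i : ℤ)) ^ m : ℤ) : ℚ) := by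
      rw [eq_div_iff]
      · rw [← hx, hq]; push_cast; ring
      · intro h0
        have : ∀ i ∈ (Finset.univ : Finset (Fin r')), (p i : ℤ) ≠ 0 := fun i _ =>
          Int.natCast_ne_zero.mpr (hp i).ne_zero
        rw [Int.cast_eq_zero] at h0
        exact pow_ne_zero m (Finset.prod_ne_zero_iff.mpr this) h0
    rw [hx', ← Rat.divInt_eq_div]
    exact Rat.den_dvd a _
  have hℓq : (ℓ : ℤ) ∣ (∏ i : Fin r', (p i : ℤ)) := by
    have h1 : (ℓ : ℤ) ∣ (∏ i : Fin r', (p i : ℤ)) ^ m :=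
      dvd_trans (Int.natCast_dvd_natCast.mpr hdvd) hden_dvd
    exact (Int.Prime.dvd_pow' (by exact_mod_cast hℓp) h1 : _)
  obtain ⟨i, _, hi⟩ := (Prime.exists_mem_finset_dvd (Int.prime_iff_natAbs_prime.mpr (by simpa using hℓp)) hℓq : _)
  have : ℓ = p i := by
    have := Int.natCast_dvd_natCast.mp hi
    exact ((Nat.prime_dvd_prime_iff_eq hℓp (hp i)).mp this)
  subst this
  exact absurd (hnorm i) (not_le.mpr (one_lt_padicNorm_of_dvd_den hdvd))

lemma mem_closure_inv_int (qz : ℤ) (hq : qz ≠ 0) {x : ℚ}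
    (hx : x ∈ Subring.closure {((qz : ℚ))⁻¹}) :
    ∃ a : ℤ, ∃ m : ℕ, x * (qz : ℚ) ^ m = a := by
  let S : Subring ℚ :=
    { carrier := {x : ℚ | ∃ a : ℤ, ∃ m : ℕ, x * (qz : ℚ) ^ m = a}
      zero_mem' := ⟨0, 0, by simp⟩
      one_mem' := ⟨1, 0, by simp⟩
      add_mem' := by
        rintro y z ⟨A, m, hA⟩ ⟨B, l, hB⟩
        exact ⟨A * qz ^ l + B * qz ^ m, m + l, by
          push_cast
          linear_combination (qz : ℚ) ^ l * hA + (qz : ℚ) ^ m * hB⟩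
      mul_mem' := by
        rintro y z ⟨A, m, hA⟩ ⟨B, l, hB⟩
        exact ⟨A * B, m + l, by
          push_cast
          linear_combination (qz : ℚ) ^ l * z * hA + (A : ℚ) * hB⟩
      neg_mem' := by
        rintro y ⟨A, m, hA⟩
        exact ⟨-A, m, by push_cast; linear_combination -hA⟩ }
  have : Subring.closure {((qz : ℚ))⁻¹} ≤ S := by
    rw [Subring.closure_le]
    rintro y hy
    rw [Set.mem_singleton_iff] at hy
    subst hy
    exact ⟨1, 1, by
      have : (qz : ℚ) ≠ 0 := Int.cast_ne_zero.mpr hq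
      field_simp
      norm_num⟩
  exact this hx

lemma multiset_prod_le_one {s : Multiset ℝ} (h : ∀ t ∈ s, 0 ≤ t ∧ t ≤ 1) : s.prod ≤ 1 := by
  induction s using Multiset.induction with
  | empty => simp
  | cons a t ih =>
    rw [Multiset.prod_cons]
    have ha := h a (Multiset.mem_cons_self a t)
    have hprodt := ih fun b hb => h b (Multiset.mem_cons_of_mem hb)
    have htnn : 0 ≤ t.prod := Multiset.prod_nonneg fun b hb => (h b (Multiset.mem_cons_of_mem hb)).1
    nlinarith

open IntermediateField in
lemma kronecker_aux (emb : AlgebraicClosure ℚ →+* ℂ) {x : AlgebraicClosure ℚ}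
    (hx0 : x ≠ 0) (hxi : IsIntegral ℤ x)
    (hroots : ∀ y : AlgebraicClosure ℚ, Polynomial.aeval y (minpoly ℚ x) = 0 →
      NormedField.toAbsoluteValue ℂ (emb y) ≤ 1) :
    ∃ m : ℕ, 0 < m ∧ x ^ m = 1 := by
  have hxQ : IsIntegral ℚ x := hxi.tower_top
  set K := ℚ⟮x⟯ with hK
  haveI : FiniteDimensional ℚ K := IntermediateField.adjoin.finiteDimensional hxQ
  haveI : NumberField K := ⟨⟩
  set x' : K := IntermediateField.AdjoinSimple.gen ℚ x with hx'
  have halg : algebraMap K (AlgebraicClosure ℚ) x' = x :=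
    IntermediateField.AdjoinSimple.algebraMap_gen ℚ x
  have hinj : Function.Injective (algebraMap K (AlgebraicClosure ℚ)) :=
    (algebraMap K (AlgebraicClosure ℚ)).injective
  have hx'i : IsIntegral ℤ x' := by
    rw [← isIntegral_algebraMap_iff hinj, halg]; exact hxi
  have hmp : minpoly ℚ x = minpoly ℚ x' := by
    rw [← halg, minpoly.algebraMap_eq hinj]
  set g := minpoly ℚ x with hg
  have hgmonic : g.Monic := minpoly.monic hxQ
  have hcomp : emb.comp (algebraMap ℚ (AlgebraicClosure ℚ)) = algebraMap ℚ ℂ :=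
    RingHom.ext fun r => (eq_ratCast _ r).trans (eq_ratCast (algebraMap ℚ ℂ) r).symm
  set gm := g.map (algebraMap ℚ (AlgebraicClosure ℚ)) with hgm
  set P := g.map (algebraMap ℚ ℂ) with hP
  have hPgm : P = gm.map emb := by rw [hgm, Polynomial.map_map, hcomp]
  have hProots : P.roots = gm.roots.map emb := by
    rw [hPgm]
    exact (IsAlgClosed.splits gm).roots_map_of_injective emb.injective
  -- all roots of P have absolute value ≤ 1
  have habs : ∀ z ∈ P.roots, NormedField.toAbsoluteValue ℂ z ≤ 1 := by
    intro z hz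
    rw [hProots, Multiset.mem_map] at hz
    obtain ⟨y, hy, rfl⟩ := hz
    refine hroots y ?_
    have := (Polynomial.mem_roots (hgmonic.map _).ne_zero).mp hy
    rw [Polynomial.aeval_def, ← Polynomial.eval_map]
    exact this
  -- the constant coefficient has absolute value ≥ 1
  have hc0ne : g.coeff 0 ≠ 0 := minpoly.coeff_zero_ne_zero hxQ hx0
  have hc0int : ∃ a : ℤ, g.coeff 0 = a := by
    have := minpoly.isIntegrallyClosed_eq_field_fractions' ℚ hxi
    rw [hg, this, Polynomial.coeff_map]
    exact ⟨(minpoly ℤ x).coeff 0, rfl⟩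
  have hc0abs : 1 ≤ NormedField.toAbsoluteValue ℂ (P.coeff 0) := by
    obtain ⟨a, ha⟩ := hc0int
    have ha0 : a ≠ 0 := by rintro rfl; simp at ha; exact hc0ne ha
    rw [hP, Polynomial.coeff_map, ha]
    have : (algebraMap ℚ ℂ) ((a : ℚ)) = (a : ℂ) := by push_cast [eq_ratCast]; norm_num
    rw [this]; show (1:ℝ) ≤ ‖(a:ℂ)‖; rw [Complex.norm_intCast]
    exact_mod_cast Int.one_le_abs ha0
  -- every root of P has absolute value exactly 1
  have hsplitsP : P.Splits :=
    IsAlgClosed.splits P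
  have hPmonic : P.Monic := hgmonic.map _
  have hprod : P.coeff 0 = (-1) ^ P.natDegree * P.roots.prod :=
    hsplitsP.coeff_zero_eq_prod_roots_of_monic hPmonic
  have hprodabs : 1 ≤ (P.roots.map (NormedField.toAbsoluteValue ℂ)).prod := by
    have : (P.roots.map (NormedField.toAbsoluteValue ℂ)).prod = (NormedField.toAbsoluteValue ℂ) P.roots.prod :=
      (map_multiset_prod (NormedField.toAbsoluteValue ℂ) _).symm
    rw [this]
    calc (1:ℝ) ≤ (NormedField.toAbsoluteValue ℂ) (P.coeff 0) := hc0abs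
      _ = (NormedField.toAbsoluteValue ℂ) ((-1) ^ P.natDegree * P.roots.prod) := by rw [hprod]
      _ = (NormedField.toAbsoluteValue ℂ) P.roots.prod := by
          rw [map_mul, map_pow, AbsoluteValue.map_neg, map_one, one_pow, one_mul]
  -- each root has absolute value 1
  have hall1 : ∀ z ∈ P.roots, (NormedField.toAbsoluteValue ℂ) z = 1 := by
    intro z hz
    refine le_antisymm (habs z hz) ?_
    obtain ⟨u, hu⟩ := Multiset.exists_cons_of_mem (Multiset.mem_map_of_mem (NormedField.toAbsoluteValue ℂ) hz)
    have humem : ∀ t ∈ u, 0 ≤ t ∧ t ≤ 1 := by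
      intro t ht
      have htmem : t ∈ P.roots.map (NormedField.toAbsoluteValue ℂ) := by rw [hu]; exact Multiset.mem_cons_of_mem ht
      rw [Multiset.mem_map] at htmem
      obtain ⟨z', hz', rfl⟩ := htmem
      exact ⟨(NormedField.toAbsoluteValue ℂ).nonneg z', habs z' hz'⟩
    have hu1 : u.prod ≤ 1 := multiset_prod_le_one humem
    have hunn : 0 ≤ u.prod := Multiset.prod_nonneg fun b hb => (humem b hb).1
    have := hprodabs
    rw [hu, Multiset.prod_cons] at this
    nlinarith [(NormedField.toAbsoluteValue ℂ).nonneg z]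
  -- apply Kronecker via number field embeddings
  have hnorm : ∀ φ : K →+* ℂ, ‖φ x'‖ = 1 := by
    intro φ
    have hφ : Polynomial.aeval (φ x') g = 0 := by
      have h0 : Polynomial.aeval x' g = 0 := by rw [hmp]; exact minpoly.aeval ℚ x'
      have := Polynomial.aeval_algHom_apply (RingHom.toRatAlgHom φ) x' g
      rw [h0, map_zero] at this
      exact this
    have hφroot : φ x' ∈ P.roots := by
      rw [Polynomial.mem_roots hPmonic.ne_zero, Polynomial.IsRoot, Polynomial.eval_map,
        ← Polynomial.aeval_def]
      exact hφ
    exact hall1 _ hφroot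
  obtain ⟨m, hm, hxm⟩ := NumberField.Embeddings.pow_eq_one_of_norm_eq_one K ℂ hx'i hnorm
  refine ⟨m, hm, ?_⟩
  have : algebraMap K (AlgebraicClosure ℚ) (x' ^ m) = 1 := by rw [hxm, map_one]
  rw [map_pow, halg] at this
  exact this

lemma padicNorm_le_one_of_lt_p {ℓ : ℕ} [hℓ : Fact ℓ.Prime] {x : ℚ}
    (h : padicNorm ℓ x < ℓ) : padicNorm ℓ x ≤ 1 := by
  rcases eq_or_ne x 0 with rfl | hx
  · simp [padicNorm]
  · rw [padicNorm.eq_zpow_of_nonzero hx] at h ⊢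
    have h1 : (1:ℚ) < (ℓ:ℚ) := by exact_mod_cast hℓ.out.one_lt
    have : (ℓ:ℚ) ^ (-padicValRat ℓ x) < (ℓ:ℚ) ^ (1:ℤ) := by rwa [zpow_one]
    rw [zpow_lt_zpow_iff_right₀ h1] at this
    calc (ℓ:ℚ) ^ (-padicValRat ℓ x) ≤ (ℓ:ℚ) ^ (0:ℤ) := by
          rw [zpow_le_zpow_iff_right₀ h1]; omega
      _ = 1 := zpow_zero _

/-- **Height gap for `S`-integers.** Let `p_1 < … < p_r` be primes, `q = p_1⋯p_r`,
`R = ℤ[1/q]`. Let `|·|_i` (for `1 ≤ i ≤ r`) be absolute values on `ℚ̄` extending the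
`p_i`-adic absolute value of `ℚ`, and `|·|_0` the restriction of the complex absolute
value along a fixed embedding `ℚ̄ → ℂ`. Then for every `n ≥ 1` there is `c > 1` such
that every nonzero `x ∈ ℚ̄` which is integral over `R` and of degree at most `n` over
`ℚ` is either a root of unity, or some Galois conjugate `y` of `x` satisfies
`|y|_i ≥ c` for some `0 ≤ i ≤ r`. -/
theorem valuation_gap (r : ℕ) (p : Fin r → ℕ)
    (hp : ∀ i, (p i).Prime) (hmono : StrictMono p)
    (v : Fin r → AbsoluteValue (AlgebraicClosure ℚ) ℝ)
    (hv : ∀ i, ∀ x : ℚ,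
      v i (algebraMap ℚ (AlgebraicClosure ℚ) x) = ((padicNorm (p i) x : ℚ) : ℝ))
    (emb : AlgebraicClosure ℚ →+* ℂ)
    (n : ℕ) (hn : 1 ≤ n) :
    ∃ c : ℝ, 1 < c ∧
      ∀ x : AlgebraicClosure ℚ, x ≠ 0 →
        (∃ f : Polynomial ℚ, f.Monic ∧
          (∀ i : ℕ, f.coeff i ∈ Subring.closure {((∏ i : Fin r, (p i : ℚ)))⁻¹}) ∧
          Polynomial.aeval x f = 0) →
        (minpoly ℚ x).natDegree ≤ n →
        (∃ m : ℕ, 0 < m ∧ x ^ m = 1) ∨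
          (∃ y : AlgebraicClosure ℚ, Polynomial.aeval y (minpoly ℚ x) = 0 ∧
            (c ≤ ‖emb y‖ ∨ ∃ i : Fin r, c ≤ v i y)) := by
  classical
  set Qbar := AlgebraicClosure ℚ
  set qz : ℤ := ∏ i : Fin r, (p i : ℤ) with hqzdef
  have hqz0 : qz ≠ 0 := by
    rw [hqzdef]
    exact Finset.prod_ne_zero_iff.mpr fun i _ => Int.natCast_ne_zero.mpr (hp i).ne_zero
  have hqcast : ((∏ i : Fin r, (p i : ℚ))) = ((qz : ℚ)) := by rw [hqzdef]; push_cast; rfl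
  set B : ℤ := 2 ^ (n + 1) with hBdef
  -- the auxiliary constant c₁
  set c₁ : ℝ := (2 : ℝ) ^ ((1:ℝ)/(2*n)) with hc₁def
  have hc₁ : 1 < c₁ := by
    rw [hc₁def]
    exact Real.one_lt_rpow_iff_of_pos (by norm_num) |>.mpr (Or.inl ⟨by norm_num, by positivity⟩)
  have hc₁n : c₁ ^ n < 2 := by
    rw [hc₁def, ← Real.rpow_natCast ((2:ℝ) ^ ((1:ℝ)/(2*n))) n, ← Real.rpow_mul (by norm_num)]
    have hne : (n:ℝ) ≠ 0 := by positivity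
    have : (1:ℝ)/(2*n) * n = 1/2 := by field_simp
    rw [this]
    calc (2:ℝ) ^ ((1:ℝ)/2) < 2 ^ (1:ℝ) := by
          rw [Real.rpow_lt_rpow_left_iff (by norm_num)]; norm_num
      _ = 2 := Real.rpow_one 2
  -- the finite set of candidate algebraic numbers
  set T : Set Qbar := ⋃ (g : Polynomial ℤ) (_ : g.natDegree ≤ n ∧ ∀ i, g.coeff i ∈ Set.Icc (-B) B),
    (((g.map (algebraMap ℤ Qbar)).roots.toFinset : Finset Qbar) : Set Qbar) with hTdef
  have hTfin : T.Finite := Polynomial.bUnion_roots_finite (algebraMap ℤ Qbar) n (Set.finite_Icc _ _)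
  have keyfin : ∀ x : Qbar, ({y : Qbar | Polynomial.aeval y (minpoly ℚ x) = 0}).Finite := by
    intro x
    have hne : minpoly ℚ x ≠ 0 := minpoly.ne_zero (((AlgebraicClosure.isAlgebraic ℚ).isAlgebraic x).isIntegral)
    refine Set.Finite.subset ((minpoly ℚ x).rootSet_finite Qbar) fun y hy => ?_
    rw [Polynomial.mem_rootSet]
    exact ⟨hne, hy⟩
  set W : Set ℝ := {t | 1 < t ∧ ∃ x ∈ T, x ≠ 0 ∧ (¬∃ m : ℕ, 0 < m ∧ x ^ m = 1) ∧
    ∃ y : Qbar, Polynomial.aeval y (minpoly ℚ x) = 0 ∧ t = ‖emb y‖} with hWdef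
  have hWfin : W.Finite := by
    refine Set.Finite.subset (Set.Finite.biUnion hTfin
      (fun x _ => Set.Finite.image (fun y => ‖emb y‖) (keyfin x))) ?_
    rintro t ⟨ht1, x, hxT, -, -, y, hy, rfl⟩
    exact Set.mem_biUnion hxT ⟨y, hy, rfl⟩
  set Wf : Finset ℝ := hWfin.toFinset with hWfdef
  have hins : (insert c₁ Wf).Nonempty := ⟨c₁, Finset.mem_insert_self _ _⟩
  set c : ℝ := (insert c₁ Wf).min' hins with hcdef
  have hcc₁ : c ≤ c₁ := Finset.min'_le _ _ (Finset.mem_insert_self _ _)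
  have hc1 : 1 < c := by
    have := Finset.min'_mem (insert c₁ Wf) hins
    rw [Finset.mem_insert] at this
    rcases this with h | h
    · rw [hcdef, h]; exact hc₁
    · have hcWf : c ∈ Wf := by rw [hcdef]; exact h
      rw [hWfdef, Set.Finite.mem_toFinset] at hcWf
      exact hcWf.1
  have hcW : ∀ t ∈ W, c ≤ t := fun t ht =>
    Finset.min'_le _ _ (Finset.mem_insert_of_mem ((Set.Finite.mem_toFinset hWfin).mpr ht))
  have hcn2 : c ^ n < 2 :=
    lt_of_le_of_lt (pow_le_pow_left₀ (by linarith) hcc₁ n) hc₁n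
  refine ⟨c, hc1, ?_⟩
  rintro x hx0 ⟨f, hfmonic, hfcoeff, hfeval⟩ hdeg
  by_cases hru : ∃ m : ℕ, 0 < m ∧ x ^ m = 1
  · exact Or.inl hru
  refine Or.inr ?_
  by_contra hcon
  push_neg at hcon
  have hxQint : IsIntegral ℚ x := ((AlgebraicClosure.isAlgebraic ℚ).isAlgebraic x).isIntegral
  -- Step 1: scale x to an algebraic integer z
  have hcoeff' : ∀ k : ℕ, ∃ a : ℤ, ∃ m : ℕ, f.coeff k * (qz:ℚ) ^ m = a := by
    intro k
    refine mem_closure_inv_int qz hqz0 ?_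
    rw [← hqcast]
    exact hfcoeff k
  choose A M hAM using hcoeff'
  set d := f.natDegree with hddef
  set Mf : ℕ := (Finset.range (d + 1)).sup M with hMfdef
  set s : ℚ := (qz:ℚ) ^ Mf with hsdef
  have hs0 : s ≠ 0 := pow_ne_zero _ (Int.cast_ne_zero.mpr hqz0)
  set F : Polynomial ℚ := f.scaleRoots s with hFdef
  have hFmonic : F.Monic := (Polynomial.monic_scaleRoots_iff s).mpr hfmonic
  set z : Qbar := algebraMap ℚ Qbar s * x with hzdef
  have hFz : Polynomial.aeval z F = 0 := by
    rw [hzdef, hFdef, Polynomial.aeval_def]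
    exact Polynomial.scaleRoots_eval₂_eq_zero (algebraMap ℚ Qbar)
      (by rw [← Polynomial.aeval_def]; exact hfeval)
  have hFrange : ∀ k : ℕ, F.coeff k ∈ Set.range (algebraMap ℤ ℚ) := by
    intro k
    rw [hFdef, Polynomial.coeff_scaleRoots]
    rcases lt_trichotomy k d with hk | hk | hk
    · have hMk : M k ≤ Mf * (d - k) := by
        calc M k ≤ Mf := Finset.le_sup (Finset.mem_range.mpr (by omega))
          _ ≤ Mf * (d - k) := Nat.le_mul_of_pos_right _ (by omega)
      refine ⟨A k * qz ^ (Mf * (d - k) - M k), ?_⟩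
      have : s ^ (d - k) = (qz:ℚ) ^ (Mf * (d - k)) := by
        rw [hsdef, ← pow_mul]
      rw [this]
      have hsplit : (qz:ℚ) ^ (Mf * (d - k)) = (qz:ℚ) ^ (M k) * (qz:ℚ) ^ (Mf * (d - k) - M k) := by
        rw [← pow_add]
        congr 1
        omega
      push_cast
      rw [hsplit, ← mul_assoc, hAM k]
      norm_cast
    · subst hk
      rw [Nat.sub_self, pow_zero, mul_one]
      have : f.coeff f.natDegree = 1 := hfmonic
      rw [hddef, this]
      exact ⟨1, by norm_num⟩
    · rw [Polynomial.coeff_eq_zero_of_natDegree_lt (by omega), zero_mul]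
      exact ⟨0, by norm_num⟩
  obtain ⟨G, hGF, hGdeg, hGmonic⟩ :=
    Polynomial.lifts_and_degree_eq_and_monic
      ((Polynomial.lifts_iff_coeff_lifts F).mpr hFrange) hFmonic
  have hzint : IsIntegral ℤ z := by
    refine ⟨G, hGmonic, ?_⟩
    have : Polynomial.aeval z (G.map (algebraMap ℤ ℚ)) = 0 := by rw [hGF]; exact hFz
    rw [Polynomial.aeval_map_algebraMap] at this
    rw [← Polynomial.aeval_def]
    exact this
  have hzQint : IsIntegral ℚ z := ((AlgebraicClosure.isAlgebraic ℚ).isAlgebraic z).isIntegral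
  -- Step 2: the minimal polynomial of z has integer coefficients
  set gz : Polynomial ℚ := minpoly ℚ z with hgzdef
  have hgz_int : ∀ k : ℕ, ∃ a : ℤ, gz.coeff k = (a : ℚ) := by
    intro k
    rw [hgzdef, minpoly.isIntegrallyClosed_eq_field_fractions' ℚ hzint, Polynomial.coeff_map]
    exact ⟨(minpoly ℤ z).coeff k, rfl⟩
  -- Step 3: relate the minimal polynomials of x and z
  set h : Polynomial ℚ := gz.scaleRoots s⁻¹ with hhdef
  have hhmonic : h.Monic := (Polynomial.monic_scaleRoots_iff _).mpr (minpoly.monic hzQint)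
  have hsmap0 : algebraMap ℚ Qbar s ≠ 0 := by
    rw [map_ne_zero_iff _ (algebraMap ℚ Qbar).injective]
    exact hs0
  have hhx : Polynomial.aeval x h = 0 := by
    have h1 : Polynomial.eval₂ (algebraMap ℚ Qbar) (algebraMap ℚ Qbar s⁻¹ * z) h = 0 := by
      rw [hhdef]
      exact Polynomial.scaleRoots_eval₂_eq_zero (algebraMap ℚ Qbar)
        (by rw [← Polynomial.aeval_def]; exact minpoly.aeval ℚ z)
    have h2 : algebraMap ℚ Qbar s⁻¹ * z = x := by
      rw [hzdef, map_inv₀, ← mul_assoc, inv_mul_cancel₀ hsmap0, one_mul]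
    rw [h2] at h1
    rw [Polynomial.aeval_def]
    exact h1
  have hdegeq : (minpoly ℚ x).natDegree = gz.natDegree := by
    have hle1 : (minpoly ℚ x).natDegree ≤ h.natDegree :=
      Polynomial.natDegree_le_natDegree (minpoly.min ℚ x hhmonic hhx)
    have hrev : Polynomial.aeval z ((minpoly ℚ x).scaleRoots s) = 0 := by
      rw [Polynomial.aeval_def, hzdef]
      exact Polynomial.scaleRoots_eval₂_eq_zero (algebraMap ℚ Qbar)
        (by rw [← Polynomial.aeval_def]; exact minpoly.aeval ℚ x)
    have hle2 : gz.natDegree ≤ ((minpoly ℚ x).scaleRoots s).natDegree :=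
      Polynomial.natDegree_le_natDegree
        (minpoly.min ℚ z ((Polynomial.monic_scaleRoots_iff _).mpr (minpoly.monic hxQint)) hrev)
    rw [Polynomial.natDegree_scaleRoots] at hle2
    have hh : h.natDegree = gz.natDegree := Polynomial.natDegree_scaleRoots _ _
    omega
  have hminx : minpoly ℚ x = h := by
    obtain ⟨k, hk⟩ := minpoly.dvd ℚ x hhx
    have hk0 : k ≠ 0 := by
      rintro rfl
      rw [mul_zero] at hk
      exact hhmonic.ne_zero hk
    have hmx0 : minpoly ℚ x ≠ 0 := minpoly.ne_zero hxQint
    have hdeg_h : h.natDegree = (minpoly ℚ x).natDegree + k.natDegree := by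
      rw [hk, Polynomial.natDegree_mul hmx0 hk0]
    have hkdeg : k.natDegree = 0 := by
      have hhdeg : h.natDegree = gz.natDegree := Polynomial.natDegree_scaleRoots _ _
      omega
    have hkmonic : k.Monic := (minpoly.monic hxQint).of_mul_monic_left (hk ▸ hhmonic)
    have : k = 1 := Polynomial.eq_one_of_monic_natDegree_zero hkmonic hkdeg
    rw [hk, this, mul_one]
  -- Step 4: coefficients of minpoly ℚ x are of S-integral form
  have hcoeffx_form : ∀ k : ℕ, ∃ a : ℤ, ∃ m : ℕ, (minpoly ℚ x).coeff k * (qz:ℚ) ^ m = a := by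
    intro k
    obtain ⟨a, ha⟩ := hgz_int k
    refine ⟨a, Mf * (gz.natDegree - k), ?_⟩
    have hqQ : (qz:ℚ) ≠ 0 := Int.cast_ne_zero.mpr hqz0
    rw [hminx, hhdef, Polynomial.coeff_scaleRoots, ha, hsdef,
      inv_pow, ← pow_mul, mul_assoc, inv_mul_cancel₀ (pow_ne_zero _ hqQ), mul_one]
  -- Step 5: roots of the minimal polynomial of x
  set g : Polynomial ℚ := minpoly ℚ x with hgdef
  have hgmonic : g.Monic := minpoly.monic hxQint
  set gmap : Polynomial Qbar := g.map (algebraMap ℚ Qbar) with hgmapdef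
  have hgmap_monic : gmap.Monic := hgmonic.map _
  have hgsplits : gmap.Splits :=
    IsAlgClosed.splits gmap
  set dx : ℕ := g.natDegree with hdxdef
  have hdxn : dx ≤ n := hdeg
  have hdx1 : 1 ≤ dx := by
    rw [hdxdef, hgdef]
    exact minpoly.natDegree_pos hxQint
  have hcard : Multiset.card gmap.roots = dx := by
    rw [hdxdef, hgmapdef]
    rw [← (IsAlgClosed.splits (g.map (algebraMap ℚ Qbar))).natDegree_eq_card_roots, Polynomial.natDegree_map]
  have hrootzero : ∀ y ∈ gmap.roots, Polynomial.aeval y g = 0 := by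
    intro y hy
    have := (Polynomial.mem_roots hgmap_monic.ne_zero).mp hy
    rw [Polynomial.aeval_def, ← Polynomial.eval_map]
    exact this
  have hgfact : gmap = (gmap.roots.map fun a => Polynomial.X - Polynomial.C a).prod :=
    hgsplits.eq_prod_roots_of_monic hgmap_monic
  have hvieta : ∀ k : ℕ, k ≤ dx →
      gmap.coeff k = (-1) ^ (dx - k) * gmap.roots.esymm (dx - k) := by
    intro k hk
    conv_lhs => rw [hgfact]
    rw [Multiset.prod_X_sub_C_coeff gmap.roots (by omega), hcard]
  -- Step 6: the coefficients are integers
  have hcoeff_int : ∀ k : ℕ, ∃ b : ℤ, g.coeff k = (b : ℚ) := by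
    intro k
    rcases le_or_gt k dx with hk | hk
    · -- p-adic bounds
      have hpadic : ∀ i : Fin r, padicNorm (p i) (g.coeff k) ≤ 1 := by
        intro i
        haveI : Fact (p i).Prime := ⟨hp i⟩
        set w := v i with hwdef
        have hw1 : ∀ j : ℕ, w (j : Qbar) ≤ 1 := by
          intro j
          have hcast : ((j : Qbar)) = algebraMap ℚ Qbar ((j : ℚ)) := by
            rw [map_natCast]
          rw [hwdef, hcast, hv i]
          have h1 := padicNorm.of_nat (p := p i) j
          exact_mod_cast h1
        have hna := nonarch_of_int_le_one w hw1
        have hesymm : w (gmap.roots.esymm (dx - k)) ≤ c ^ (dx - k) := by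
          refine absv_esymm_le_of_nonarch w hna (by linarith) _ ?_ _
          intro y hy
          exact le_of_lt ((hcon y (hrootzero y hy)).2 i)
        have hwcoeff : w (gmap.coeff k) = ((padicNorm (p i) (g.coeff k) : ℚ) : ℝ) := by
          rw [hgmapdef, Polynomial.coeff_map]
          exact hv i (g.coeff k)
        have hwcoeff_le : w (gmap.coeff k) < 2 := by
          rw [hvieta k hk, w.map_mul, w.map_pow]
          have hwneg : w (-1) = 1 := by
            rw [AbsoluteValue.map_neg, w.map_one]
          rw [hwneg, one_pow, one_mul]
          calc w (gmap.roots.esymm (dx - k)) ≤ c ^ (dx - k) := hesymm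
            _ ≤ c ^ n := pow_le_pow_right₀ (by linarith) (by omega)
            _ < 2 := hcn2
        have hp2 : (2:ℝ) ≤ ((p i : ℚ) : ℝ) := by
          have := (hp i).two_le
          push_cast
          exact_mod_cast this
        have : ((padicNorm (p i) (g.coeff k) : ℚ) : ℝ) < ((p i : ℚ) : ℝ) := by
          rw [← hwcoeff]
          exact lt_of_lt_of_le hwcoeff_le hp2
        have hlt : padicNorm (p i) (g.coeff k) < (p i : ℚ) := by exact_mod_cast this
        exact padicNorm_le_one_of_lt_p hlt
      obtain ⟨a, m, ham⟩ := hcoeffx_form k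
      have hden : (g.coeff k).den = 1 := by
        refine den_eq_one_of_padic hp a m ?_ hpadic
        rw [hqcast]
        exact ham
      exact ⟨(g.coeff k).num, by rw [← Rat.num_div_den (g.coeff k), hden]; norm_num⟩
    · exact ⟨0, by rw [Polynomial.coeff_eq_zero_of_natDegree_lt hk]; norm_num⟩
  -- Step 7: archimedean bound on the coefficients
  have hBpos : (0:ℤ) < B := by rw [hBdef]; positivity
  have hcoeff_bound : ∀ k : ℕ, |((g.coeff k : ℚ) : ℝ)| ≤ (B : ℝ) := by
    intro k
    rcases le_or_gt k dx with hk | hk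
    · set Pc : Polynomial ℂ := gmap.map emb with hPcdef
      have hPccoeff : Pc.coeff k = ((g.coeff k : ℚ) : ℂ) := by
        rw [hPcdef, Polynomial.coeff_map, hgmapdef, Polynomial.coeff_map]
        exact eq_ratCast (emb.comp (algebraMap ℚ Qbar)) (g.coeff k)
      have hPcfact : Pc = ((gmap.roots.map emb).map fun a => Polynomial.X - Polynomial.C a).prod := by
        rw [hPcdef]
        conv_lhs => rw [hgfact]
        rw [← Polynomial.coe_mapRingHom, map_multiset_prod, Multiset.map_map, Multiset.map_map]
        congr 1
        refine Multiset.map_congr rfl fun y _ => ?_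
        simp [Polynomial.map_sub]
      have hcardC : Multiset.card (gmap.roots.map emb) = dx := by
        rw [Multiset.card_map, hcard]
      have hVC : Pc.coeff k = (-1) ^ (dx - k) * (gmap.roots.map emb).esymm (dx - k) := by
        rw [hPcfact, Multiset.prod_X_sub_C_coeff _ (by omega : k ≤ Multiset.card (gmap.roots.map emb)), hcardC]
      have hrootsC : ∀ zz ∈ gmap.roots.map emb, ‖zz‖ ≤ c := by
        intro zz hzz
        rw [Multiset.mem_map] at hzz
        obtain ⟨y, hy, rfl⟩ := hzz
        exact le_of_lt (hcon y (hrootzero y hy)).1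
      have habs : ‖Pc.coeff k‖ ≤ (dx.choose (dx - k)) * c ^ (dx - k) := by
        rw [hVC, norm_mul, norm_pow, norm_neg, norm_one, one_pow, one_mul]
        have := absv_esymm_le (NormedField.toAbsoluteValue ℂ) (by linarith : (0:ℝ) ≤ c) _ hrootsC (dx - k)
        rw [hcardC] at this
        exact this
      have hchoose : (dx.choose (dx - k) : ℝ) ≤ (2:ℝ) ^ n := by
        have h1 : dx.choose (dx - k) ≤ 2 ^ dx := by
          calc dx.choose (dx - k) ≤ ∑ i ∈ Finset.range (dx + 1), dx.choose i :=
                Finset.single_le_sum (fun i _ => Nat.zero_le _) (Finset.mem_range.mpr (by omega))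
            _ = 2 ^ dx := Nat.sum_range_choose dx
        have h2 : (2:ℕ) ^ dx ≤ 2 ^ n := Nat.pow_le_pow_right (by norm_num) hdxn
        exact_mod_cast le_trans h1 h2
      have hcpow : c ^ (dx - k) ≤ c ^ n := pow_le_pow_right₀ (by linarith) (by omega)
      have : ‖Pc.coeff k‖ ≤ (B : ℝ) := by
        calc ‖Pc.coeff k‖ ≤ (dx.choose (dx - k)) * c ^ (dx - k) := habs
          _ ≤ (2:ℝ) ^ n * c ^ n := by
              refine mul_le_mul hchoose hcpow (by positivity) (by positivity)
          _ ≤ (2:ℝ) ^ n * 2 := by nlinarith [hcn2, (by positivity : (0:ℝ) < (2:ℝ)^n)]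
          _ = (B : ℝ) := by rw [hBdef]; push_cast; ring
      have habsq : ‖((g.coeff k : ℚ) : ℂ)‖ = |((g.coeff k : ℚ) : ℝ)| := by
        rw [show ((g.coeff k : ℚ) : ℂ) = (((g.coeff k : ℚ) : ℝ) : ℂ) by push_cast; ring,
          Complex.norm_real, Real.norm_eq_abs]
      rwa [hPccoeff, habsq] at this
    · rw [Polynomial.coeff_eq_zero_of_natDegree_lt hk]
      simp only [Rat.cast_zero, abs_zero]
      positivity
  -- Step 8: descend the minimal polynomial to ℤ
  have hgrange : ∀ k : ℕ, g.coeff k ∈ Set.range (algebraMap ℤ ℚ) := by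
    intro k
    obtain ⟨b, hb⟩ := hcoeff_int k
    exact ⟨b, by rw [eq_intCast]; exact hb.symm⟩
  obtain ⟨gZ, hgZmap, hgZdeg, hgZmonic⟩ :=
    Polynomial.lifts_and_degree_eq_and_monic
      ((Polynomial.lifts_iff_coeff_lifts g).mpr hgrange) hgmonic
  have hgZnatdeg : gZ.natDegree = dx := by
    rw [hdxdef, ← hgZmap]
    exact (Polynomial.natDegree_map_eq_of_injective
      (algebraMap ℤ ℚ).injective_int gZ).symm ▸ rfl
  have hgZcoeff : ∀ i : ℕ, ((gZ.coeff i : ℚ)) = g.coeff i := by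
    intro i
    rw [← hgZmap, Polynomial.coeff_map, eq_intCast]
  have hgZbound : ∀ i : ℕ, gZ.coeff i ∈ Set.Icc (-B) B := by
    intro i
    have h1 := hcoeff_bound i
    rw [← hgZcoeff i] at h1
    have h2 : |((gZ.coeff i : ℝ))| ≤ (B : ℝ) := by exact_mod_cast h1
    rw [abs_le] at h2
    rw [Set.mem_Icc]
    constructor
    · exact_mod_cast h2.1
    · exact_mod_cast h2.2
  have hgZQbar : gZ.map (algebraMap ℤ Qbar) = gmap := by
    rw [IsScalarTower.algebraMap_eq ℤ ℚ Qbar, ← Polynomial.map_map, hgZmap, hgmapdef]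
  have hxroot : x ∈ (gZ.map (algebraMap ℤ Qbar)).roots := by
    rw [hgZQbar, Polynomial.mem_roots hgmap_monic.ne_zero, Polynomial.IsRoot,
      Polynomial.eval_map, ← Polynomial.aeval_def, hgdef]
    exact minpoly.aeval ℚ x
  have hxT : x ∈ T := by
    rw [hTdef]
    refine Set.mem_iUnion.mpr ⟨gZ, Set.mem_iUnion.mpr ⟨⟨by omega, hgZbound⟩, ?_⟩⟩
    rw [Finset.mem_coe, Multiset.mem_toFinset]
    exact hxroot
  have hxint : IsIntegral ℤ x := by
    refine ⟨gZ, hgZmonic, ?_⟩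
    have h1 : Polynomial.aeval x (gZ.map (algebraMap ℤ ℚ)) = 0 := by
      rw [hgZmap, hgdef]; exact minpoly.aeval ℚ x
    rw [Polynomial.aeval_map_algebraMap] at h1
    rw [← Polynomial.aeval_def]
    exact h1
  -- Step 9: Kronecker's theorem gives a large conjugate
  have hexists : ∃ y : Qbar, Polynomial.aeval y (minpoly ℚ x) = 0 ∧ 1 < ‖emb y‖ := by
    by_contra hno
    push_neg at hno
    exact hru (kronecker_aux emb hx0 hxint hno)
  obtain ⟨y₀, hy₀, hy₀abs⟩ := hexists
  have htW : ‖emb y₀‖ ∈ W := by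
    rw [hWdef]
    exact ⟨hy₀abs, x, hxT, hx0, hru, y₀, hy₀, rfl⟩
  have h1 := hcW _ htW
  have h2 := (hcon y₀ hy₀).1
  linarith
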